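/- For every z ∈ ℝ^K with ‖z‖ ≤ 1/4, the softmax vector satisfies ‖softmax(z) − (1/K)·1‖ ≤ (8/√K)·‖z‖. -/

import Mathlib

open scoped RealInnerProductSpace
open Finset

noncomputable section

/-- The softmax function on `ℝ^K`. -/
def softmax {K : ℕ} (z : EuclideanSpace ℝ (Fin K)) : EuclideanSpace ℝ (Fin K) :=
  WithLp.toLp 2 (fun k => Real.exp (z k) / ∑ l, Real.exp (z l))

/-- The vector `(1/K)·𝟙 ∈ ℝ^K` (the all-ones vector scaled by `1/K`). -/
def uniformVec (K : ℕ) : EuclideanSpace ℝ (Fin K) :=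
  WithLp.toLp 2 (fun _ => 1 / (K : ℝ))

lemma exp_quarter_le_two : Real.exp (1/4) ≤ 2 := by
  have h := Real.log_two_gt_d9
  have : (1:ℝ)/4 ≤ Real.log 2 := by linarith
  calc Real.exp (1/4) ≤ Real.exp (Real.log 2) := Real.exp_le_exp.mpr this
    _ = 2 := Real.exp_log (by norm_num)

lemma half_le_exp {a : ℝ} (ha : -(1/4) ≤ a) : (1:ℝ)/2 ≤ Real.exp a := by
  have h1 : Real.exp (-(1/4)) ≤ Real.exp a := Real.exp_le_exp.mpr ha
  have h2 : Real.exp (-(1/4)) = 1 / Real.exp (1/4) := by rw [Real.exp_neg]; ring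
  have h3 : (1:ℝ)/2 ≤ 1 / Real.exp (1/4) := by
    rw [div_le_div_iff₀ (by norm_num) (Real.exp_pos _)]
    linarith [exp_quarter_le_two]
  linarith [h2 ▸ h3]

lemma exp_sub_exp_le {a b : ℝ} (hab : a ≤ b) (hb : b ≤ 1/4) :
    Real.exp b - Real.exp a ≤ 2 * (b - a) := by
  have key : Real.exp b - Real.exp a ≤ Real.exp b * (b - a) := by
    have h := Real.add_one_le_exp (a - b)
    have : Real.exp b * (1 - Real.exp (a - b)) ≤ Real.exp b * (b - a) :=
      mul_le_mul_of_nonneg_left (by linarith) (Real.exp_pos b).le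
    calc Real.exp b - Real.exp a = Real.exp b * (1 - Real.exp (a - b)) := by
          rw [mul_sub, mul_one, ← Real.exp_add]; ring_nf
      _ ≤ Real.exp b * (b - a) := this
  have hb2 : Real.exp b ≤ 2 := le_trans (Real.exp_le_exp.mpr hb) exp_quarter_le_two
  calc Real.exp b - Real.exp a ≤ Real.exp b * (b - a) := key
    _ ≤ 2 * (b - a) := mul_le_mul_of_nonneg_right hb2 (by linarith)

lemma abs_exp_sub_exp {a b : ℝ} (ha : |a| ≤ 1/4) (hb : |b| ≤ 1/4) :
    |Real.exp a - Real.exp b| ≤ 2 * |a - b| := by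
  rcases le_total a b with h | h
  · rw [abs_sub_comm, abs_of_nonneg (by linarith [Real.exp_le_exp.mpr h] : (0:ℝ) ≤ Real.exp b - Real.exp a),
      abs_sub_comm, abs_of_nonneg (by linarith : (0:ℝ) ≤ b - a)]
    exact exp_sub_exp_le h (by cases abs_le.mp hb; linarith)
  · rw [abs_of_nonneg (by linarith [Real.exp_le_exp.mpr h] : (0:ℝ) ≤ Real.exp a - Real.exp b),
      abs_of_nonneg (by linarith : (0:ℝ) ≤ a - b)]
    exact exp_sub_exp_le h (by cases abs_le.mp ha; linarith)

/-- For every `z ∈ ℝ^K` with `‖z‖ ≤ 1/4`,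
`‖softmax z − (1/K)·𝟙‖ ≤ (8/√K)·‖z‖`. -/
theorem softmax_near_uniform (K : ℕ) (hK : 1 ≤ K)
    (z : EuclideanSpace ℝ (Fin K)) (hz : ‖z‖ ≤ 1 / 4) :
    ‖softmax z - uniformVec K‖ ≤ 8 / Real.sqrt (K : ℝ) * ‖z‖ := by
  set N : ℝ := (K : ℝ) with hNdef
  have hN1 : (1:ℝ) ≤ N := by rw [hNdef]; exact_mod_cast hK
  have hN0 : (0:ℝ) < N := by linarith
  -- norm squared = sum of squares
  have hnormsq : ‖z‖^2 = ∑ i, (z i)^2 := by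
    rw [EuclideanSpace.norm_eq, Real.sq_sqrt (by positivity)]
    simp [sq_abs]
  have hcoord : ∀ k, |z k| ≤ ‖z‖ := by
    intro k
    have h1 : (z k)^2 ≤ ∑ i, (z i)^2 :=
      Finset.single_le_sum (fun i _ => sq_nonneg (z i)) (mem_univ k)
    have := Real.sqrt_le_sqrt (hnormsq ▸ h1)
    rwa [Real.sqrt_sq_eq_abs, Real.sqrt_sq (norm_nonneg z)] at this
  have hz' : ∀ k, |z k| ≤ 1/4 := fun k => le_trans (hcoord k) hz
  set S : ℝ := ∑ l, Real.exp (z l) with hSdef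
  have hSpos : 0 < S := Finset.sum_pos (fun l _ => Real.exp_pos _) ⟨⟨0, hK⟩, mem_univ _⟩
  have hS : N / 2 ≤ S := by
    have : ∑ _l : Fin K, (1:ℝ)/2 ≤ S :=
      Finset.sum_le_sum (fun l _ => half_le_exp (by linarith [abs_le.mp (hz' l)]))
    simpa [Finset.card_univ, div_eq_mul_inv, mul_comm] using this
  set T : ℝ := ∑ l, |z l| with hTdef
  have hT0 : 0 ≤ T := Finset.sum_nonneg (fun l _ => abs_nonneg _)
  have hT2 : T^2 ≤ N * ‖z‖^2 := by
    have := sq_sum_le_card_mul_sum_sq (s := (univ : Finset (Fin K))) (f := fun l => |z l|)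
    simp only [Finset.card_univ, Fintype.card_fin, sq_abs] at this
    rw [hnormsq]
    exact_mod_cast this
  -- pointwise bound
  have hpt : ∀ k, |softmax z k - uniformVec K k| ≤ (4 * (N * |z k| + T)) / N^2 := by
    intro k
    have hnum : |N * Real.exp (z k) - S| ≤ 2 * N * |z k| + 2 * T := by
      have h1 : N * Real.exp (z k) - S = ∑ l, (Real.exp (z k) - Real.exp (z l)) := by
        rw [Finset.sum_sub_distrib, Finset.sum_const, Finset.card_univ, Fintype.card_fin,
          hSdef, nsmul_eq_mul]
      rw [h1]
      calc |∑ l, (Real.exp (z k) - Real.exp (z l))| ≤ ∑ l, |Real.exp (z k) - Real.exp (z l)| :=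
            Finset.abs_sum_le_sum_abs _ _
        _ ≤ ∑ l, (2 * |z k| + 2 * |z l|) := by
            refine Finset.sum_le_sum (fun l _ => ?_)
            calc |Real.exp (z k) - Real.exp (z l)| ≤ 2 * |z k - z l| :=
                  abs_exp_sub_exp (hz' k) (hz' l)
              _ ≤ 2 * (|z k| + |z l|) := by
                  have := abs_sub (z k) (z l); nlinarith [abs_sub_abs_le_abs_sub (z k) (z l), abs_sub (z k) (z l)]
              _ = 2 * |z k| + 2 * |z l| := by ring
        _ = 2 * N * |z k| + 2 * T := by
            rw [Finset.sum_add_distrib, Finset.sum_const, Finset.card_univ, Fintype.card_fin,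
              nsmul_eq_mul, ← Finset.mul_sum, ← hTdef]
            ring
    have heq : softmax z k - uniformVec K k = (N * Real.exp (z k) - S) / (N * S) := by
      simp only [softmax, uniformVec, WithLp.ofLp_toLp, ← hSdef, ← hNdef]
      field_simp
    rw [heq, abs_div, abs_of_pos (by positivity : (0:ℝ) < N * S)]
    have hNS : N * (N/2) ≤ N * S := mul_le_mul_of_nonneg_left hS hN0.le
    calc |N * Real.exp (z k) - S| / (N * S) ≤ (2 * N * |z k| + 2 * T) / (N * (N/2)) := by
          apply div_le_div₀ (by positivity) hnum (by positivity) hNS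
      _ = (4 * (N * |z k| + T)) / N^2 := by field_simp; ring
  -- sum of squares bound
  have hsum : ∑ k, (softmax z k - uniformVec K k)^2 ≤ 64 * ‖z‖^2 / N^2 := by
    calc ∑ k, (softmax z k - uniformVec K k)^2
        ≤ ∑ k, ((4 * (N * |z k| + T)) / N^2)^2 := by
          refine Finset.sum_le_sum (fun k _ => ?_)
          rw [← sq_abs]
          exact pow_le_pow_left₀ (abs_nonneg _) (hpt k) 2
      _ = (16 / N^4) * ∑ k, (N * |z k| + T)^2 := by
          rw [Finset.mul_sum]; refine Finset.sum_congr rfl (fun k _ => ?_); field_simp; ring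
      _ ≤ (16 / N^4) * ∑ k, (2 * N^2 * (z k)^2 + 2 * T^2) := by
          refine mul_le_mul_of_nonneg_left (Finset.sum_le_sum (fun k _ => ?_)) (by positivity)
          nlinarith [sq_nonneg (N * |z k| - T), sq_abs (z k)]
      _ = (16 / N^4) * (2 * N^2 * ‖z‖^2 + N * (2 * T^2)) := by
          rw [Finset.sum_add_distrib, Finset.sum_const, Finset.card_univ, Fintype.card_fin,
            nsmul_eq_mul, ← Finset.mul_sum, hnormsq]
      _ ≤ (16 / N^4) * (2 * N^2 * ‖z‖^2 + N * (2 * (N * ‖z‖^2))) := by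
          refine mul_le_mul_of_nonneg_left (by nlinarith) (by positivity)
      _ = 64 * ‖z‖^2 / N^2 := by field_simp; ring
  -- conclude
  have hnorm : ‖softmax z - uniformVec K‖ ≤ 8 * ‖z‖ / N := by
    rw [EuclideanSpace.norm_eq]
    have h8 : (8 * ‖z‖ / N) = Real.sqrt ((8 * ‖z‖ / N)^2) := by
      rw [Real.sqrt_sq (by positivity)]
    rw [h8]
    apply Real.sqrt_le_sqrt
    have : ∀ i, ‖(softmax z - uniformVec K) i‖^2 = (softmax z i - uniformVec K i)^2 := by
      intro i
      simp [PiLp.sub_apply, sq_abs, Real.norm_eq_abs]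
    calc ∑ i, ‖(softmax z - uniformVec K) i‖^2 = ∑ i, (softmax z i - uniformVec K i)^2 :=
          Finset.sum_congr rfl (fun i _ => this i)
      _ ≤ 64 * ‖z‖^2 / N^2 := hsum
      _ = (8 * ‖z‖ / N)^2 := by field_simp; ring
  have hsqrt : Real.sqrt N ≤ N := by
    nlinarith [Real.sq_sqrt hN0.le, Real.sqrt_nonneg N]
  have hsqrtpos : 0 < Real.sqrt N := Real.sqrt_pos.mpr hN0
  calc ‖softmax z - uniformVec K‖ ≤ 8 * ‖z‖ / N := hnorm
    _ ≤ 8 * ‖z‖ / Real.sqrt N := by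
        apply div_le_div_of_nonneg_left (by positivity) hsqrtpos hsqrt
    _ = 8 / Real.sqrt N * ‖z‖ := by ring

end
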